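/- Consider the first-order implicit-explicit scheme for the linear advection model problem on L ≥ 1 cells with periodic boundary conditions: given w^n : Fin L → ℝ and Courant numbers σ_e ≥ 0 and σ_i ≥ 0, suppose w^{n+1} : Fin L → ℝ satisfies, for every j (indices cyclic mod L), w_j^{n+1} = w_j^n − σ_e (w_j^n − w_{j−1}^n) − σ_i (w_j^{n+1} − w_{j−1}^{n+1}). If the CFL condition σ_e ≤ 1 holds, then the scheme is total variation diminishing: TV(w^{n+1}) ≤ TV(w^n). -/

import Mathlib

/-- TVD property of the first-order implicit-explicit scheme for the linear
advection model problem with periodic boundary conditions, under the CFL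
condition `σe ≤ 1`. -/
theorem first_order_scheme_TVD (L : ℕ) [NeZero L] (σe σi : ℝ)
    (hσe : 0 ≤ σe) (hσi : 0 ≤ σi) (hCFL : σe ≤ 1)
    (wn wn1 : Fin L → ℝ)
    (hscheme : ∀ j : Fin L,
      wn1 j = wn j - σe * (wn j - wn (j - 1)) - σi * (wn1 j - wn1 (j - 1))) :
    ∑ j : Fin L, |wn1 (j + 1) - wn1 j| ≤ ∑ j : Fin L, |wn (j + 1) - wn j| := by
  set D : Fin L → ℝ := fun j => wn1 (j + 1) - wn1 j with hD
  set E : Fin L → ℝ := fun j => wn (j + 1) - wn j with hE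
  have key : ∀ j : Fin L,
      (1 + σi) * D j = (1 - σe) * E j + σe * E (j - 1) + σi * D (j - 1) := by
    intro j
    have h1 := hscheme (j + 1)
    have h2 := hscheme j
    have e1 : j + 1 - 1 = j := by simp
    have e2 : j - 1 + 1 = j := by simp
    simp only [hD, hE, e1, e2]
    rw [e1] at h1
    linarith
  have absineq : ∀ j : Fin L,
      (1 + σi) * |D j| ≤ (1 - σe) * |E j| + σe * |E (j - 1)| + σi * |D (j - 1)| := by
    intro j
    have h := key j
    have : |(1 + σi) * D j| ≤ |(1 - σe) * E j| + |σe * E (j - 1)| + |σi * D (j - 1)| := by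
      rw [h]; exact (abs_add_le _ _).trans (by gcongr; exact abs_add_le _ _)
    rw [abs_mul, abs_mul, abs_mul, abs_mul,
      abs_of_nonneg (by linarith : (0:ℝ) ≤ 1 + σi),
      abs_of_nonneg (by linarith : (0:ℝ) ≤ 1 - σe),
      abs_of_nonneg hσe, abs_of_nonneg hσi] at this
    exact this
  have shiftE : ∑ j : Fin L, |E (j - 1)| = ∑ j : Fin L, |E j| :=
    Equiv.sum_comp (Equiv.subRight (1 : Fin L)) (fun j => |E j|)
  have shiftD : ∑ j : Fin L, |D (j - 1)| = ∑ j : Fin L, |D j| :=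
    Equiv.sum_comp (Equiv.subRight (1 : Fin L)) (fun j => |D j|)
  have hsum : ∑ j : Fin L, (1 + σi) * |D j| ≤
      ∑ j : Fin L, ((1 - σe) * |E j| + σe * |E (j - 1)| + σi * |D (j - 1)|) :=
    Finset.sum_le_sum fun j _ => absineq j
  rw [← Finset.mul_sum] at hsum
  rw [Finset.sum_add_distrib, Finset.sum_add_distrib, ← Finset.mul_sum, ← Finset.mul_sum,
    ← Finset.mul_sum, shiftE, shiftD] at hsum
  nlinarith [hsum]
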